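/- (Proposition 3.4, case n = 1, order-reversed version.) For every integer m > −c_{ij} and every e ∈ {1, −1}: ∑_{r+s=m, r,s≥0} (−1)^r q_i^{er(−c_{ij}−m+1)} B_i^{(s)} B_j B_i^{(r)} = 0. -/

import Mathlib

noncomputable section

/-- The quantum integer `[n]_v = (v^n - v^{-n})/(v - v^{-1})`. -/
def qint {K : Type*} [Field K] (v : RatFunc K) (n : ℤ) : RatFunc K :=
  (v ^ n - v ^ (-n)) / (v - v⁻¹)

/-- The quantum factorial `[m]_v! = [1]_v [2]_v ⋯ [m]_v`. -/
def qfact {K : Type*} [Field K] (v : RatFunc K) (m : ℕ) : RatFunc K :=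
  ∏ k ∈ Finset.range m, qint v ((k : ℤ) + 1)

/-- The divided power `x^{(m)} = x^m/[m]_v!` for `m ≥ 0`, and `0` for `m < 0`. -/
def dp {K : Type*} [Field K] {A : Type*} [Ring A] [Algebra (RatFunc K) A]
    (v : RatFunc K) (x : A) (m : ℤ) : A :=
  if m < 0 then 0 else (qfact v m.toNat)⁻¹ • x ^ m.toNat

section Aux

variable {K : Type*} [Field K] {A : Type*} [Ring A] [Algebra (RatFunc K) A]

lemma pow_X_ne_one' (ε : ℕ) (hε : 0 < ε) (v : RatFunc K) (hv : v = RatFunc.X ^ ε)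
    (k : ℕ) (hk : 0 < k) : v ^ k ≠ 1 := by
  subst hv
  rw [← pow_mul]
  intro h
  have hX : (RatFunc.X : RatFunc K) = algebraMap (Polynomial K) _ Polynomial.X :=
    (RatFunc.algebraMap_X).symm
  rw [hX, ← map_pow, ← map_one (algebraMap (Polynomial K) (RatFunc K))] at h
  have h2 := IsFractionRing.injective (Polynomial K) (RatFunc K) h
  have := congrArg Polynomial.natDegree h2
  simp [Polynomial.natDegree_X_pow] at this
  omega

lemma v_ne_zero' (ε : ℕ) (v : RatFunc K) (hv : v = RatFunc.X ^ ε) : v ≠ 0 := by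
  subst hv; exact pow_ne_zero _ RatFunc.X_ne_zero

lemma num_ne' (ε : ℕ) (hε : 0 < ε) (v : RatFunc K) (hv : v = RatFunc.X ^ ε)
    (a : ℤ) (ha : 0 < a) : v ^ a - v ^ (-a) ≠ 0 := by
  have hv0 := v_ne_zero' ε v hv
  intro h
  have h1 : v ^ a = v ^ (-a) := sub_eq_zero.mp h
  have h2 : v ^ (2 * a) = 1 := by
    have : v ^ a * v ^ a = v ^ (-a) * v ^ a := by rw [h1]
    rwa [← zpow_add₀ hv0, ← zpow_add₀ hv0, neg_add_cancel, zpow_zero,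
      show a + a = 2 * a by ring] at this
  have h3 : v ^ ((2 * a).toNat) = 1 := by
    rw [← h2, ← zpow_natCast, Int.toNat_of_nonneg (by omega)]
  exact pow_X_ne_one' ε hε v hv _ (by omega) h3

lemma qint_ne' (ε : ℕ) (hε : 0 < ε) (v : RatFunc K) (hv : v = RatFunc.X ^ ε)
    (a : ℤ) (ha : 0 < a) : qint v a ≠ 0 := by
  apply div_ne_zero (num_ne' ε hε v hv a ha)
  have := num_ne' ε hε v hv 1 one_pos
  simpa [zpow_one, zpow_neg] using this

lemma qint_zero' (v : RatFunc K) : qint v 0 = 0 := by simp [qint]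

lemma qfact_succ' (v : RatFunc K) (n : ℕ) :
    qfact v (n+1) = qfact v n * qint v ((n:ℤ)+1) := Finset.prod_range_succ _ _

lemma dp_natCast' (v : RatFunc K) (x : A) (n : ℕ) :
    dp v x (n : ℤ) = (qfact v n)⁻¹ • x ^ n := by
  simp [dp]

lemma mul_dp' (v : RatFunc K) (hq : ∀ n : ℕ, qint v ((n:ℤ)+1) ≠ 0) (x : A) (n : ℤ)
    (hn : 0 ≤ n) : x * dp v x n = qint v (n+1) • dp v x (n+1) := by
  lift n to ℕ using hn
  rw [show (n:ℤ)+1 = ((n+1 : ℕ) : ℤ) by push_cast; ring, dp_natCast', dp_natCast']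
  rw [mul_smul_comm, smul_smul, ← pow_succ']
  congr 1
  push_cast
  rw [qfact_succ', mul_inv_rev, ← mul_assoc, mul_inv_cancel₀ (hq n), one_mul]

lemma dp_mul' (v : RatFunc K) (hq : ∀ n : ℕ, qint v ((n:ℤ)+1) ≠ 0) (x : A) (n : ℤ)
    (hn : 0 ≤ n) : dp v x n * x = qint v (n+1) • dp v x (n+1) := by
  lift n to ℕ using hn
  rw [show (n:ℤ)+1 = ((n+1 : ℕ) : ℤ) by push_cast; ring, dp_natCast', dp_natCast']
  rw [smul_mul_assoc, smul_smul, ← pow_succ]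
  congr 1
  push_cast
  rw [qfact_succ', mul_inv_rev, ← mul_assoc, mul_inv_cancel₀ (hq n), one_mul]

lemma qkey' (v : RatFunc K) (hv : v ≠ 0) (e : ℤ) (he : e = 1 ∨ e = -1) (m r : ℕ) :
    qint v ((m:ℤ)+1-(r:ℤ)) + v ^ (-(e*((m:ℤ)+1))) * qint v (r:ℤ)
      = qint v ((m:ℤ)+1) * v ^ (-(e*(r:ℤ))) := by
  rw [qint, qint, qint, ← mul_div_assoc, div_mul_eq_mul_div, ← add_div]
  congr 1
  rcases he with he | he <;> subst he <;>
    · rw [mul_sub, sub_mul, ← zpow_add₀ hv, ← zpow_add₀ hv, ← zpow_add₀ hv, ← zpow_add₀ hv]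
      ring_nf

/-- The main sum. -/
def Fsum (v : RatFunc K) (Bi Bj : A) (c e : ℤ) (m : ℕ) : A :=
  ∑ r ∈ Finset.range (m + 1),
      ((-1 : RatFunc K) ^ r * v ^ (e * (r : ℤ) * (-c - (m : ℤ) + 1))) •
        (dp v Bi ((m : ℤ) - (r : ℤ)) * Bj * dp v Bi (r : ℤ))

lemma recursion' (v : RatFunc K) (hv : v ≠ 0) (hq : ∀ n : ℕ, qint v ((n:ℤ)+1) ≠ 0)
    (Bi Bj : A) (c e : ℤ) (he : e = 1 ∨ e = -1) (m : ℕ) :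
    qint v ((m:ℤ)+1) • Fsum v Bi Bj c e (m+1)
      = Bi * Fsum v Bi Bj c e m - v ^ (e*(-c-2*(m:ℤ))) • (Fsum v Bi Bj c e m * Bi) := by
  have h1 : Bi * Fsum v Bi Bj c e m = ∑ r ∈ Finset.range (m+1+1),
      ((-1 : RatFunc K) ^ r * v ^ (e * (r : ℤ) * (-c - (m : ℤ) + 1))
          * qint v ((m:ℤ)+1-(r:ℤ))) •
        (dp v Bi ((m : ℤ) + 1 - (r : ℤ)) * Bj * dp v Bi (r : ℤ)) := by
    rw [Fsum, Finset.mul_sum]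
    conv_rhs => rw [Finset.sum_range_succ]
    have hz : qint v ((m:ℤ)+1-((m+1:ℕ):ℤ)) = 0 := by
      push_cast
      rw [show (m:ℤ)+1-((m:ℤ)+1) = 0 by ring]
      exact qint_zero' v
    rw [hz, mul_zero, zero_smul, add_zero]
    refine Finset.sum_congr rfl fun r hr => ?_
    have hr' : (r:ℤ) ≤ (m:ℤ) := by exact_mod_cast Nat.lt_succ_iff.mp (Finset.mem_range.mp hr)
    have hb := mul_dp' v hq Bi ((m:ℤ)-(r:ℤ)) (by omega)
    rw [show (m:ℤ)-(r:ℤ)+1 = (m:ℤ)+1-(r:ℤ) by ring] at hb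
    rw [mul_smul_comm, ← mul_assoc, ← mul_assoc, hb, smul_mul_assoc, smul_mul_assoc, smul_smul]
  have h2 : Fsum v Bi Bj c e m * Bi = ∑ r ∈ Finset.range (m+1+1),
      (-((-1 : RatFunc K) ^ r) * v ^ (e * ((r : ℤ) - 1) * (-c - (m : ℤ) + 1))
          * qint v (r:ℤ)) •
        (dp v Bi ((m : ℤ) + 1 - (r : ℤ)) * Bj * dp v Bi (r : ℤ)) := by
    rw [Fsum, Finset.sum_mul]
    conv_rhs => rw [Finset.sum_range_succ']
    have hz : qint v ((0:ℕ):ℤ) = 0 := by exact_mod_cast qint_zero' v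
    rw [hz, mul_zero, zero_smul, add_zero]
    refine Finset.sum_congr rfl fun r hr => ?_
    have hd := dp_mul' v hq Bi (r:ℤ) (by positivity)
    rw [smul_mul_assoc, mul_assoc (dp v Bi ((m:ℤ) - (r:ℤ)) * Bj) (dp v Bi (r:ℤ)) Bi, hd, mul_smul_comm, smul_smul]
    push_cast
    rw [show (m:ℤ) + 1 - ((r:ℤ)+1) = (m:ℤ) - (r:ℤ) by ring,
        show e * ((r:ℤ) + 1 - 1) * (-c - (m:ℤ) + 1) = e * (r:ℤ) * (-c - (m:ℤ) + 1) by ring]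
    congr 1
    ring
  rw [h1, h2, Fsum, Finset.smul_sum, Finset.smul_sum, ← Finset.sum_sub_distrib]
  refine Finset.sum_congr rfl fun r hr => ?_
  push_cast
  rw [smul_smul, smul_smul, ← sub_smul]
  congr 1
  have hk := qkey' v hv e he m r
  have hBC : v ^ (e * (r:ℤ) * (-c - ((m:ℤ) + 1) + 1))
      = v ^ (e * (r:ℤ) * (-c - (m:ℤ) + 1)) * v ^ (-(e * (r:ℤ))) := by
    rw [← zpow_add₀ hv]; ring_nf
  have hBD : v ^ (e * (-c - 2*(m:ℤ))) * v ^ (e * ((r:ℤ) - 1) * (-c - (m:ℤ) + 1))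
      = v ^ (e * (r:ℤ) * (-c - (m:ℤ) + 1)) * v ^ (-(e * ((m:ℤ)+1))) := by
    rw [← zpow_add₀ hv, ← zpow_add₀ hv]; ring_nf
  linear_combination (-((-1:RatFunc K)^r) * v ^ (e * (r:ℤ) * (-c - (m:ℤ) + 1))) * hk
    + (qint v ((m:ℤ)+1) * (-1:RatFunc K)^r) * hBC
    + (-((-1:RatFunc K)^r) * qint v (r:ℤ)) * hBD

lemma base' (v : RatFunc K) (Bi Bj : A) (c e : ℤ) (hc : c ≤ 0)
    (hserre : ∑ n ∈ Finset.range ((1 - c).toNat + 1),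
        ((-1 : RatFunc K) ^ n) • (dp v Bi (n : ℤ) * Bj * dp v Bi (1 - c - (n : ℤ))) = 0) :
    Fsum v Bi Bj c e ((1 - c).toNat) = 0 := by
  set m₀ := (1 - c).toNat with hm₀def
  have hm₀ : (m₀ : ℤ) = 1 - c := Int.toNat_of_nonneg (by omega)
  have step1 : Fsum v Bi Bj c e m₀
      = ∑ r ∈ Finset.range (m₀ + 1),
          ((-1 : RatFunc K) ^ r) • (dp v Bi ((m₀:ℤ) - (r:ℤ)) * Bj * dp v Bi (r:ℤ)) := by
    rw [Fsum]
    refine Finset.sum_congr rfl fun r hr => ?_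
    rw [show e * (r:ℤ) * (-c - (m₀:ℤ) + 1) = 0 by rw [hm₀]; ring, zpow_zero, mul_one]
  rw [step1,
    ← Finset.sum_range_reflect
      (fun j => ((-1 : RatFunc K) ^ j) • (dp v Bi ((m₀:ℤ) - (j:ℤ)) * Bj * dp v Bi (j:ℤ)))
      (m₀ + 1)]
  have step2 : ∀ j ∈ Finset.range (m₀ + 1),
      ((-1 : RatFunc K) ^ (m₀ + 1 - 1 - j)) •
          (dp v Bi ((m₀:ℤ) - ((m₀ + 1 - 1 - j : ℕ):ℤ)) * Bj * dp v Bi ((m₀ + 1 - 1 - j : ℕ):ℤ))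
        = (-1 : RatFunc K) ^ m₀ •
            (((-1 : RatFunc K) ^ j) • (dp v Bi (j:ℤ) * Bj * dp v Bi (1 - c - (j:ℤ)))) := by
    intro j hj
    have hj' : j ≤ m₀ := Nat.lt_succ_iff.mp (Finset.mem_range.mp hj)
    have hred : m₀ + 1 - 1 - j = m₀ - j := by omega
    have hcast : ((m₀ - j : ℕ) : ℤ) = (m₀:ℤ) - (j:ℤ) := by
      push_cast [hj']; ring
    have hsign : (-1 : RatFunc K) ^ (m₀ - j) = (-1) ^ m₀ * (-1) ^ j := by
      have hh : (-1 : RatFunc K) ^ j * (-1) ^ j = 1 := by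
        rw [← pow_add]; exact Even.neg_one_pow ⟨j, rfl⟩
      calc (-1 : RatFunc K) ^ (m₀ - j) = (-1) ^ (m₀ - j) * ((-1) ^ j * (-1) ^ j) := by
            rw [hh, mul_one]
        _ = ((-1) ^ (m₀ - j) * (-1) ^ j) * (-1) ^ j := by ring
        _ = (-1) ^ m₀ * (-1) ^ j := by rw [pow_sub_mul_pow _ hj']
    rw [hred, hcast, hsign, show (m₀:ℤ) - ((m₀:ℤ) - (j:ℤ)) = (j:ℤ) by ring,
      show (m₀:ℤ) - (j:ℤ) = 1 - c - (j:ℤ) by rw [hm₀], mul_smul]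
  rw [Finset.sum_congr rfl step2, ← Finset.smul_sum, hserre, smul_zero]

end Aux

theorem stmt12 {K : Type*} [Field K] [CharZero K]
    {A : Type*} [Ring A] [Algebra (RatFunc K) A]
    (ε : ℕ) (hε : 0 < ε) (v : RatFunc K) (hv : v = RatFunc.X ^ ε)
    (Bi Bj : A) (c : ℤ) (hc : c ≤ 0)
    (hserre : ∑ n ∈ Finset.range ((1 - c).toNat + 1),
        ((-1 : RatFunc K) ^ n) • (dp v Bi (n : ℤ) * Bj * dp v Bi (1 - c - (n : ℤ))) = 0)
    (m : ℕ) (hm : -c < (m : ℤ)) (e : ℤ) (he : e = 1 ∨ e = -1) :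
    ∑ r ∈ Finset.range (m + 1),
        ((-1 : RatFunc K) ^ r * v ^ (e * (r : ℤ) * (-c - (m : ℤ) + 1))) •
          (dp v Bi ((m : ℤ) - (r : ℤ)) * Bj * dp v Bi (r : ℤ)) = 0 := by
  have hv0 : v ≠ 0 := v_ne_zero' ε v hv
  have hq : ∀ n : ℕ, qint v ((n:ℤ)+1) ≠ 0 := fun n => qint_ne' ε hε v hv _ (by omega)
  set m₀ := (1 - c).toNat with hm₀def
  have hm₀ : (m₀ : ℤ) = 1 - c := Int.toNat_of_nonneg (by omega)
  have key : ∀ k, Fsum v Bi Bj c e (m₀ + k) = 0 := by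
    intro k
    induction k with
    | zero => exact base' v Bi Bj c e hc hserre
    | succ n ih =>
      have hrec := recursion' v hv0 hq Bi Bj c e he (m₀ + n)
      rw [ih, mul_zero, zero_mul, smul_zero, sub_zero] at hrec
      rcases smul_eq_zero.mp hrec with h | h
      · exact absurd h (hq (m₀ + n))
      · exact h
  obtain ⟨k, rfl⟩ : ∃ k, m = m₀ + k := ⟨m - m₀, by omega⟩
  have := key k
  rwa [Fsum] at this
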